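/- For every real number M > 0, every real q ≥ 0, and every (τ,x) with 0 ≤ τ ≤ 2 and (1-τ)² - x² < 1, the Schwarzschild-frame spatial derivative of the weight r^{-q} obeys the exact bound |(1/Ω(τ,x))·∂_x (r(τ,x)^{-q})| ≤ (q/(2√M))·r(τ,x)^{-q-1/2}; i.e., each spatial frame derivative of a power weight costs at most a factor comparable to r^{-1/2}. -/

import Mathlib

/-- The Kruskal relation function `f_M(ρ) = (1 - ρ/(2M))·exp(ρ/(2M))`. -/
noncomputable def fM (M ρ : ℝ) : ℝ := (1 - ρ / (2 * M)) * Real.exp (ρ / (2 * M))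

/-- The radius function in the `(τ,x)` coordinates: `r(τ,x) = r_M((1-τ)² - x²)`. -/
noncomputable def rr (rM : ℝ → ℝ) (τ x : ℝ) : ℝ := rM ((1 - τ) ^ 2 - x ^ 2)

/-- The conformal factor `Ω²(τ,x) = (32M³/r(τ,x))·exp(-r(τ,x)/(2M))`. -/
noncomputable def Om2 (M : ℝ) (rM : ℝ → ℝ) (τ x : ℝ) : ℝ :=
  32 * M ^ 3 / rr rM τ x * Real.exp (-(rr rM τ x) / (2 * M))

/-- `Ω(τ,x) = √(Ω²(τ,x))`. -/
noncomputable def Om (M : ℝ) (rM : ℝ → ℝ) (τ x : ℝ) : ℝ := Real.sqrt (Om2 M rM τ x)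

open Real

/-- `e^{-u} ≤ 1 - u + u²/2` for `u ≥ 0`. -/
lemma exp_neg_le_quadratic {u : ℝ} (hu : 0 ≤ u) :
    Real.exp (-u) ≤ 1 - u + u ^ 2 / 2 := by
  have key : MonotoneOn (fun t : ℝ => 1 - t + t ^ 2 / 2 - Real.exp (-t)) (Set.Ici 0) := by
    apply monotoneOn_of_deriv_nonneg (convex_Ici 0)
    · fun_prop
    · intro t ht
      have : DifferentiableAt ℝ (fun t : ℝ => 1 - t + t ^ 2 / 2 - Real.exp (-t)) t := by
        fun_prop
      exact this.differentiableWithinAt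
    · intro t ht
      simp only [interior_Ici, Set.mem_Ioi] at ht
      have hD : HasDerivAt (fun t : ℝ => 1 - t + t ^ 2 / 2 - Real.exp (-t))
          (-1 + t + Real.exp (-t)) t := by
        have h1 : HasDerivAt (fun t : ℝ => Real.exp (-t)) (-Real.exp (-t)) t := by
          simpa [Function.comp_def] using (Real.hasDerivAt_exp (-t)).comp t ((hasDerivAt_id t).neg)
        have h2 : HasDerivAt (fun t : ℝ => 1 - t + t ^ 2 / 2) (-1 + t) t := by
          have := ((hasDerivAt_pow 2 t).div_const 2)
          have h3 := ((hasDerivAt_const t (1:ℝ)).sub (hasDerivAt_id t)).add this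
          refine h3.congr_deriv ?_
          ring
        refine (h2.sub h1).congr_deriv ?_
        ring
      rw [hD.deriv]
      have := Real.add_one_le_exp (-t)
      linarith
  have h0 : (fun t : ℝ => 1 - t + t ^ 2 / 2 - Real.exp (-t)) 0 ≤
      (fun t : ℝ => 1 - t + t ^ 2 / 2 - Real.exp (-t)) u :=
    key (Set.self_mem_Ici) hu hu
  norm_num at h0
  linarith

lemma fM_hasDerivAt (M : ℝ) (hM : 0 < M) (ρ : ℝ) :
    HasDerivAt (fM M) (-(ρ / (4 * M ^ 2)) * Real.exp (ρ / (2 * M))) ρ := by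
  have hM' : (2 * M) ≠ 0 := by positivity
  have h1 : HasDerivAt (fun t : ℝ => t / (2 * M)) (1 / (2 * M)) ρ := by
    simpa using (hasDerivAt_id ρ).div_const (2 * M)
  have h2 : HasDerivAt (fun t : ℝ => Real.exp (t / (2 * M)))
      (Real.exp (ρ / (2 * M)) * (1 / (2 * M))) ρ := by
    have := (Real.hasDerivAt_exp (ρ / (2 * M))).comp ρ h1; exact this
  have h3 : HasDerivAt (fun t : ℝ => 1 - t / (2 * M)) (-(1 / (2 * M))) ρ := by
    simpa [Pi.sub_def] using (hasDerivAt_const ρ (1:ℝ)).sub h1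
  have := h3.mul h2
  refine this.congr_deriv ?_
  field_simp
  ring

lemma fM_strictAntiOn (M : ℝ) (hM : 0 < M) : StrictAntiOn (fM M) (Set.Ici 0) := by
  apply strictAntiOn_of_deriv_neg (convex_Ici 0)
  · unfold fM; fun_prop
  · intro t ht
    simp only [interior_Ici, Set.mem_Ioi] at ht
    rw [(fM_hasDerivAt M hM t).deriv]
    have : 0 < t / (4 * M ^ 2) := by positivity
    nlinarith [Real.exp_pos (t / (2 * M))]

lemma rM_continuousAt (M : ℝ) (hM : 0 < M) (rM : ℝ → ℝ)
    (hrM : ∀ s : ℝ, s < 1 → 0 < rM s ∧ fM M (rM s) = s)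
    {s : ℝ} (hs : s < 1) : ContinuousAt rM s := by
  rw [Metric.continuousAt_iff]
  intro ε hε
  obtain ⟨hr, hfr⟩ := hrM s hs
  set r := rM s with hrdef
  set ε' : ℝ := min ε (r / 2) with hε'def
  have hε'pos : 0 < ε' := lt_min hε (by linarith)
  have hrsub : 0 < r - ε' := by
    have : ε' ≤ r / 2 := min_le_right _ _
    linarith
  have ha : fM M (r + ε') < s := by
    rw [← hfr]
    exact fM_strictAntiOn M hM (le_of_lt hr) (le_of_lt (by positivity : (0:ℝ) < r + ε')) (by linarith)
  have hb : s < fM M (r - ε') := by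
    rw [← hfr]
    exact fM_strictAntiOn M hM (le_of_lt hrsub) (le_of_lt hr) (by linarith)
  refine ⟨min (min (fM M (r - ε') - s) (s - fM M (r + ε'))) (1 - s), by
    apply lt_min (lt_min (by linarith) (by linarith)) (by linarith), ?_⟩
  intro y hy
  rw [Real.dist_eq] at hy
  have hy1 : y < 1 := by
    have := abs_lt.mp hy
    have h2 := this.2
    have : y - s < 1 - s := lt_of_lt_of_le h2 (min_le_right _ _)
    linarith
  obtain ⟨hry, hfy⟩ := hrM y hy1
  have habs := abs_lt.mp hy
  have hyb : y < fM M (r - ε') := by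
    have : y - s < fM M (r - ε') - s :=
      lt_of_lt_of_le habs.2 (le_trans (min_le_left _ _) (min_le_left _ _))
    linarith
  have hya : fM M (r + ε') < y := by
    have : -(s - fM M (r + ε')) < y - s := by
      have := habs.1
      have h3 : min (min (fM M (r - ε') - s) (s - fM M (r + ε'))) (1 - s) ≤
          s - fM M (r + ε') := le_trans (min_le_left _ _) (min_le_right _ _)
      linarith
    linarith
  -- deduce r - ε' < rM y < r + ε'
  have h1 : r - ε' < rM y := by
    by_contra hc
    push_neg at hc
    have := fM_strictAntiOn M hM (le_of_lt hry) (le_of_lt hrsub)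
    rcases eq_or_lt_of_le hc with heq | hlt
    · rw [heq] at hfy; linarith
    · have := fM_strictAntiOn M hM (le_of_lt hry) (le_of_lt hrsub) hlt
      rw [hfy] at this; linarith
  have h2 : rM y < r + ε' := by
    by_contra hc
    push_neg at hc
    rcases eq_or_lt_of_le hc with heq | hlt
    · rw [← heq] at hfy; linarith
    · have := fM_strictAntiOn M hM (le_of_lt (by positivity : (0:ℝ) < r + ε')) (le_of_lt hry) hlt
      rw [hfy] at this; linarith
  rw [Real.dist_eq, abs_lt]
  constructor
  · have : ε' ≤ ε := min_le_left _ _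
    linarith
  · have : ε' ≤ ε := min_le_left _ _
    linarith

lemma rM_hasDerivAt (M : ℝ) (hM : 0 < M) (rM : ℝ → ℝ)
    (hrM : ∀ s : ℝ, s < 1 → 0 < rM s ∧ fM M (rM s) = s)
    {s : ℝ} (hs : s < 1) :
    HasDerivAt rM (-(rM s / (4 * M ^ 2)) * Real.exp (rM s / (2 * M)))⁻¹ s := by
  obtain ⟨hr, _⟩ := hrM s hs
  apply HasDerivAt.of_local_left_inverse (rM_continuousAt M hM rM hrM hs)
    (fM_hasDerivAt M hM (rM s))
  · have := Real.exp_pos (rM s / (2 * M))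
    intro hc
    have : rM s / (4 * M ^ 2) > 0 := by positivity
    nlinarith
  · filter_upwards [Iio_mem_nhds hs] with y hy
    exact (hrM y hy).2


/-- For every `M > 0`, every real `q ≥ 0`, and every `(τ,x)` with `0 ≤ τ ≤ 2` and
`(1-τ)² - x² < 1`, the Schwarzschild-frame spatial derivative of the weight `r^{-q}`
obeys `|(1/Ω)·∂_x(r^{-q})| ≤ (q/(2√M))·r^{-q-1/2}`: each spatial frame derivative of a
power weight costs at most a factor comparable to `r^{-1/2}`. -/
theorem weight_spatial_frame_derivative_bound (M : ℝ) (hM : 0 < M) (rM : ℝ → ℝ)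
    (hrM : ∀ s : ℝ, s < 1 → 0 < rM s ∧ fM M (rM s) = s)
    (q : ℝ) (hq : 0 ≤ q) (τ x : ℝ) (hτ0 : 0 ≤ τ) (hτ2 : τ ≤ 2)
    (h : (1 - τ) ^ 2 - x ^ 2 < 1) :
    |(1 / Om M rM τ x) * deriv (fun y : ℝ => rr rM τ y ^ (-q)) x| ≤
      q / (2 * Real.sqrt M) * rr rM τ x ^ (-q - 1 / 2) := by
  obtain ⟨hr, hfr⟩ := hrM ((1 - τ) ^ 2 - x ^ 2) h
  set s : ℝ := (1 - τ) ^ 2 - x ^ 2 with hsdef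
  set r : ℝ := rM s with hrdef
  set E : ℝ := Real.exp (r / (2 * M)) with hEdef
  have hEpos : 0 < E := Real.exp_pos _
  have hrrx : rr rM τ x = r := rfl
  have hsval : (1 - r / (2 * M)) * E = s := by rw [hEdef, ← hfr]; rfl
  have hg : HasDerivAt (fun y : ℝ => (1 - τ) ^ 2 - y ^ 2) (-(2 * x)) x := by
    have := (hasDerivAt_const x ((1 - τ) ^ 2 : ℝ)).sub (hasDerivAt_pow 2 x)
    simpa [Pi.sub_def] using this
  have hrMd : HasDerivAt rM (-(r / (4 * M ^ 2)) * E)⁻¹ s := rM_hasDerivAt M hM rM hrM h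
  have hcomp : HasDerivAt (fun y : ℝ => rr rM τ y)
      ((-(r / (4 * M ^ 2)) * E)⁻¹ * (-(2 * x))) x := by
    have := hrMd.comp x hg
    simpa [rr, Function.comp_def] using this
  have hpow : HasDerivAt (fun y : ℝ => rr rM τ y ^ (-q))
      (((-(r / (4 * M ^ 2)) * E)⁻¹ * (-(2 * x))) * (-q) * r ^ (-q - 1)) x := by
    have := hcomp.rpow_const (p := -q) (Or.inl (by rw [hrrx]; exact ne_of_gt hr))
    rw [hrrx] at this
    exact this
  set Ω : ℝ := Om M rM τ x with hΩdef
  have hOm2 : Om2 M rM τ x = 32 * M ^ 3 / (r * E) := by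
    rw [Om2, hrrx, hEdef, neg_div, Real.exp_neg]
    field_simp
  have hOm2pos : 0 < Om2 M rM τ x := by rw [hOm2]; positivity
  have hΩpos : 0 < Ω := Real.sqrt_pos.mpr hOm2pos
  have hΩsq : Ω ^ 2 = 32 * M ^ 3 / (r * E) := by
    rw [hΩdef, Om, Real.sq_sqrt hOm2pos.le, hOm2]
  rw [hpow.deriv, hrrx]
  clear_value Ω
  clear hΩdef hOm2 hOm2pos
  clear_value s r E
  -- key geometric inequality : 8M²x² ≤ r²E
  have hx2 : 8 * M ^ 2 * x ^ 2 ≤ r ^ 2 * E := by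
    have hu : (0:ℝ) ≤ r / (2 * M) := by positivity
    have hq2 := exp_neg_le_quadratic hu
    have hmul : Real.exp (-(r / (2 * M))) * E = 1 := by
      rw [hEdef, ← Real.exp_add]; simp
    have hone : (1:ℝ) ≤ (1 - r / (2 * M) + (r / (2 * M)) ^ 2 / 2) * E := by
      nlinarith [hEpos]
    have hexpand : (1 - r / (2 * M) + (r / (2 * M)) ^ 2 / 2) * E
        = s + r ^ 2 * E / (8 * M ^ 2) := by
      rw [← hsval]; field_simp; ring
    have h3 : 1 - s ≤ r ^ 2 * E / (8 * M ^ 2) := by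
      rw [hexpand] at hone; linarith
    have hτb : (1 - τ) ^ 2 ≤ 1 := by nlinarith
    have h1s : x ^ 2 ≤ 1 - s := by rw [hsdef] at h ⊢; nlinarith
    have hM2 : (0:ℝ) < M ^ 2 := by positivity
    have : x ^ 2 ≤ r ^ 2 * E / (8 * M ^ 2) := le_trans h1s h3
    rw [le_div_iff₀ (by positivity : (0:ℝ) < 8 * M ^ 2)] at this
    linarith
  -- the main scalar inequality
  have hab : 8 * M ^ 2 * |x| / (Ω * r * E) ≤ Real.sqrt r / (2 * Real.sqrt M) := by
    have ha : 0 ≤ 8 * M ^ 2 * |x| / (Ω * r * E) := by positivity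
    have hb : 0 ≤ Real.sqrt r / (2 * Real.sqrt M) := by positivity
    have hsq : (8 * M ^ 2 * |x| / (Ω * r * E)) ^ 2 ≤
        (Real.sqrt r / (2 * Real.sqrt M)) ^ 2 := by
      have h1 : (8 * M ^ 2 * |x| / (Ω * r * E)) ^ 2
          = 64 * M ^ 4 * x ^ 2 / (Ω ^ 2 * r ^ 2 * E ^ 2) := by
        rw [div_pow]; rw [mul_pow, mul_pow, sq_abs, mul_pow, mul_pow]; ring
      have h2 : (Real.sqrt r / (2 * Real.sqrt M)) ^ 2 = r / (4 * M) := by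
        rw [div_pow, mul_pow, Real.sq_sqrt hr.le, Real.sq_sqrt hM.le]; norm_num
      rw [h1, h2, hΩsq]
      have hden : 32 * M ^ 3 / (r * E) * r ^ 2 * E ^ 2 = 32 * M ^ 3 * r * E := by
        field_simp
      rw [div_le_div_iff₀ (by rw [hΩsq] at *; positivity) (by positivity)]
      have hrw : 32 * M ^ 3 / (r * E) * (r ^ 2 * E ^ 2) = 32 * M ^ 3 * r * E := by
        field_simp
      calc 64 * M ^ 4 * x ^ 2 * (4 * M) = 32 * M ^ 3 * (8 * M ^ 2 * x ^ 2) := by ring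
        _ ≤ 32 * M ^ 3 * (r ^ 2 * E) := by
            exact mul_le_mul_of_nonneg_left hx2 (by positivity)
        _ = r * (32 * M ^ 3 * r * E) := by ring
        _ = r * (32 * M ^ 3 / (r * E) * r ^ 2 * E ^ 2) := by rw [hden]
    calc 8 * M ^ 2 * |x| / (Ω * r * E)
        = Real.sqrt ((8 * M ^ 2 * |x| / (Ω * r * E)) ^ 2) := (Real.sqrt_sq ha).symm
      _ ≤ Real.sqrt ((Real.sqrt r / (2 * Real.sqrt M)) ^ 2) := Real.sqrt_le_sqrt hsq
      _ = Real.sqrt r / (2 * Real.sqrt M) := Real.sqrt_sq hb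
  -- assemble
  have hrp : (0:ℝ) < r ^ (-q - 1) := Real.rpow_pos_of_pos hr _
  have hsplit : r ^ (-q - 1 / 2) = r ^ (-q - 1) * Real.sqrt r := by
    rw [Real.sqrt_eq_rpow, ← Real.rpow_add hr]
    congr 1
    ring
  have hkey : (1 / Ω) * (((-(r / (4 * M ^ 2)) * E)⁻¹ * (-(2 * x))) * (-q) * r ^ (-q - 1))
      = -(8 * M ^ 2 * x * q / (Ω * r * E) * r ^ (-q - 1)) := by
    have hrne : r ≠ 0 := ne_of_gt hr
    have hEne : E ≠ 0 := ne_of_gt hEpos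
    have hΩne : Ω ≠ 0 := ne_of_gt hΩpos
    have hMne : M ≠ 0 := ne_of_gt hM
    field_simp
    ring
  rw [hkey, abs_neg, abs_mul, abs_of_pos hrp, abs_div, abs_of_pos (by positivity :
      (0:ℝ) < Ω * r * E), abs_mul, abs_mul, abs_of_nonneg hq,
      abs_of_pos (by positivity : (0:ℝ) < 8 * M ^ 2), hsplit]
  have hfinal := mul_le_mul_of_nonneg_right hab (mul_nonneg hq hrp.le)
  calc 8 * M ^ 2 * |x| * q / (Ω * r * E) * r ^ (-q - 1)
      = 8 * M ^ 2 * |x| / (Ω * r * E) * (q * r ^ (-q - 1)) := by ring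
    _ ≤ Real.sqrt r / (2 * Real.sqrt M) * (q * r ^ (-q - 1)) := hfinal
    _ = q / (2 * Real.sqrt M) * (r ^ (-q - 1) * Real.sqrt r) := by ring
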